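/- Let J be a lsc gauge, x₀ feasible for min{J(x) : Ax = b₀}, and y₀ with A^T y₀ ∈ ∂J(x₀). If 0 ∈ int[Im A^T - ∂J(x₀)] (the strict Robinson condition), then the solution mapping S_{y₀}(v,w) = {x : v + A^T y₀ ∈ ∂J(x), w = Ax - b₀} is upper Lipschitzian at (0,0): there is κ > 0 such that S_{y₀}(v,w) ⊆ {x₀} + κ(‖v‖ + ‖w‖)𝔹 for all (v,w) near (0,0). -/

import Mathlib

open Set
open scoped InnerProductSpace

set_option maxHeartbeats 1000000 in
/-- Let `J` be a lsc gauge, `x₀` feasible for `min {J x : Ax = b₀}`, and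
`Aᵀy₀ ∈ ∂J(x₀)`. If the strict Robinson condition `0 ∈ int (Im Aᵀ - ∂J(x₀))` holds, then
the solution mapping `S_{y₀}(v,w) = {x : v + Aᵀy₀ ∈ ∂J(x), w = Ax - b₀}` is upper
Lipschitzian at `(0,0)`. -/
theorem upper_lipschitz_of_strict_robinson
    (n m : ℕ) (J : EuclideanSpace ℝ (Fin n) → EReal)
    (hnonneg : ∀ x, 0 ≤ J x) (hzero : J 0 = 0)
    (hhomog : ∀ (α : ℝ), 0 < α → ∀ x, J (α • x) = (α : EReal) * J x)
    (hconvex : ∀ x y, ∀ a b : ℝ, 0 ≤ a → 0 ≤ b → a + b = 1 →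
      J (a • x + b • y) ≤ (a : EReal) * J x + (b : EReal) * J y)
    (hlsc : LowerSemicontinuous J)
    (A : EuclideanSpace ℝ (Fin n) →L[ℝ] EuclideanSpace ℝ (Fin m))
    (b₀ y₀ : EuclideanSpace ℝ (Fin m))
    (x₀ : EuclideanSpace ℝ (Fin n)) (hfeas : A x₀ = b₀) (hfin : J x₀ < ⊤)
    (subJ : EuclideanSpace ℝ (Fin n) → Set (EuclideanSpace ℝ (Fin n)))
    (hsubJ : ∀ x, subJ x = {s | ∀ y, J x + ((⟪s, y - x⟫_ℝ : ℝ) : EReal) ≤ J y})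
    (hsub : ContinuousLinearMap.adjoint A y₀ ∈ subJ x₀)
    (hrobinson : (0 : EuclideanSpace ℝ (Fin n)) ∈
      interior {v | ∃ u ∈ Set.range (ContinuousLinearMap.adjoint A), ∃ s ∈ subJ x₀, v = u - s}) :
    ∃ κ > (0 : ℝ), ∃ ε > (0 : ℝ), ∀ v : EuclideanSpace ℝ (Fin n),
      ∀ w : EuclideanSpace ℝ (Fin m), ‖v‖ < ε → ‖w‖ < ε →
        ∀ x : EuclideanSpace ℝ (Fin n), v + ContinuousLinearMap.adjoint A y₀ ∈ subJ x →
          w = A x - b₀ → ‖x - x₀‖ ≤ κ * (‖v‖ + ‖w‖) := by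
  -- trivial case n = 0
  rcases Nat.eq_zero_or_pos n with hn | hn
  · refine ⟨1, one_pos, 1, one_pos, fun v w hv hw x hx hwx => ?_⟩
    subst hn
    have hx0 : x - x₀ = (0 : EuclideanSpace ℝ (Fin 0)) := Subsingleton.elim _ _
    rw [hx0, norm_zero]
    positivity
  -- a ball of radius ρ inside the Robinson set
  obtain ⟨ρ, hρpos, hball⟩ := Metric.mem_nhds_iff.mp (mem_interior_iff_mem_nhds.mp hrobinson)
  -- coordinate basis vectors
  set E : Fin n → EuclideanSpace ℝ (Fin n) := fun i => EuclideanSpace.single i (1:ℝ) with hE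
  have hnormE : ∀ i, ‖E i‖ = 1 := fun i => by simp [hE]
  -- representation of small multiples of basis vectors
  have hrep : ∀ i : Fin n, ∀ c : ℝ, |c| < ρ →
      ∃ z s, (∀ y, J x₀ + ((⟪s, y - x₀⟫_ℝ : ℝ) : EReal) ≤ J y) ∧
        c • E i = ContinuousLinearMap.adjoint A z - s := by
    intro i c hc
    have hmem : c • E i ∈ Metric.ball (0 : EuclideanSpace ℝ (Fin n)) ρ := by
      rw [mem_ball_zero_iff, norm_smul, hnormE, mul_one]
      exact hc
    obtain ⟨u, ⟨z, hz⟩, s, hs, heq⟩ := hball hmem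
    rw [hsubJ] at hs
    exact ⟨z, s, hs, by rw [heq, hz]⟩
  have hhalf : |ρ/2| < ρ := by rw [abs_of_pos (by linarith)]; linarith
  have hmhalf : |(-(ρ/2))| < ρ := by rw [abs_neg]; exact hhalf
  choose zp sp hsp hzp using fun i => hrep i (ρ/2) hhalf
  choose zm sm hsm hzm using fun i => hrep i (-(ρ/2)) hmhalf
  -- constants
  set M : ℝ := ∑ i, (‖zp i‖ + ‖zm i‖) with hM
  have hMnn : 0 ≤ M := Finset.sum_nonneg fun i _ => by positivity
  set ρ' : ℝ := ρ / (2 * n) with hρ'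
  have hnpos : (0:ℝ) < n := by exact_mod_cast hn
  have hρ'pos : 0 < ρ' := by rw [hρ']; positivity
  refine ⟨2 * (M + ‖y₀‖ + 1) / ρ', by positivity, ρ'/2, by positivity, ?_⟩
  intro v w hvnorm hwnorm x hv hw
  set d : EuclideanSpace ℝ (Fin n) := x - x₀ with hd
  rcases eq_or_ne d 0 with hd0 | hd0
  · rw [hd0, norm_zero]; positivity
  have hdpos : 0 < ‖d‖ := norm_pos_iff.mpr hd0
  have hEd : ∀ i, ⟪E i, d⟫_ℝ = d i := by
    intro i
    simp [hE, EuclideanSpace.inner_single_left]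
  have hAd : A d = w := by
    rw [hd, map_sub, hfeas, hw]
  -- turn the subgradient conditions into real inequalities
  rw [hsubJ] at hv
  have hJ0top : J x₀ ≠ ⊤ := hfin.ne
  have hJ0bot : J x₀ ≠ ⊥ := (lt_of_lt_of_le (by simp) (hnonneg x₀)).ne'
  have hJxtop : J x ≠ ⊤ := by
    intro htop
    have := hv x₀
    rw [htop, EReal.top_add_coe] at this
    exact absurd (top_le_iff.mp this) hJ0top
  have hJxbot : J x ≠ ⊥ := (lt_of_lt_of_le (by simp) (hnonneg x)).ne'
  set rx : ℝ := (J x).toReal with hrx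
  set r₀ : ℝ := (J x₀).toReal with hr₀
  have hJx : J x = (rx : EReal) := (EReal.coe_toReal hJxtop hJxbot).symm
  have hJx0 : J x₀ = (r₀ : EReal) := (EReal.coe_toReal hJ0top hJ0bot).symm
  have h1 : rx + ⟪v + ContinuousLinearMap.adjoint A y₀, x₀ - x⟫_ℝ ≤ r₀ := by
    have := hv x₀
    rw [hJx, hJx0, ← EReal.coe_add] at this
    exact_mod_cast this
  set T : ℝ := ‖v‖ * ‖d‖ + ‖y₀‖ * ‖w‖ with hT
  have hTnn : 0 ≤ T := by positivity
  have H : ∀ s : EuclideanSpace ℝ (Fin n),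
      (∀ y, J x₀ + ((⟪s, y - x₀⟫_ℝ : ℝ) : EReal) ≤ J y) → ⟪s, d⟫_ℝ ≤ T := by
    intro s hs
    have h2 : r₀ + ⟪s, d⟫_ℝ ≤ rx := by
      have := hs x
      rw [hJx, hJx0, ← EReal.coe_add, ← hd] at this
      exact_mod_cast this
    have h3 : ⟪v + ContinuousLinearMap.adjoint A y₀, x₀ - x⟫_ℝ =
        -(⟪v, d⟫_ℝ + ⟪y₀, w⟫_ℝ) := by
      have : x₀ - x = -d := by rw [hd]; abel
      rw [this, inner_neg_right, inner_add_left,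
        ContinuousLinearMap.adjoint_inner_left, hAd]
    rw [h3] at h1
    have h4 : ⟪s, d⟫_ℝ ≤ ⟪v, d⟫_ℝ + ⟪y₀, w⟫_ℝ := by linarith
    have h5 : ⟪v, d⟫_ℝ ≤ ‖v‖ * ‖d‖ := real_inner_le_norm v d
    have h6 : ⟪y₀, w⟫_ℝ ≤ ‖y₀‖ * ‖w‖ := real_inner_le_norm y₀ w
    rw [hT]; linarith
  -- the coefficients
  set c : Fin n → ℝ := fun i => -(ρ' / ‖d‖) * d i with hc
  have hdi : ∀ i, |d i| ≤ ‖d‖ := by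
    intro i
    rw [← Real.sqrt_sq_eq_abs, EuclideanSpace.norm_eq]
    apply Real.sqrt_le_sqrt
    refine (Finset.single_le_sum (f := fun j => ‖d j‖^2)
      (fun j _ => by positivity) (Finset.mem_univ i)).trans_eq' (by simp)
  have habsc : ∀ i, |c i| = (ρ' / ‖d‖) * |d i| := by
    intro i
    rw [hc, abs_mul, abs_neg, abs_of_pos (div_pos hρ'pos hdpos)]
  have hsumabs : (∑ i, |c i|) ≤ ρ/2 := by
    have hsd : (∑ i, |d i|) ≤ (n : ℝ) * ‖d‖ := by
      have := Finset.sum_le_card_nsmul Finset.univ (fun i => |d i|) ‖d‖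
        (fun i _ => hdi i)
      simpa [nsmul_eq_mul] using this
    calc (∑ i, |c i|) = (ρ' / ‖d‖) * ∑ i, |d i| := by
          rw [Finset.mul_sum]; exact Finset.sum_congr rfl fun i _ => habsc i
      _ ≤ (ρ' / ‖d‖) * ((n : ℝ) * ‖d‖) := by
          exact mul_le_mul_of_nonneg_left hsd (div_pos hρ'pos hdpos).le
      _ = ρ' * n := by
          have hdne : ‖d‖ ≠ 0 := hdpos.ne'
          field_simp
      _ = ρ/2 := by
          rw [hρ']
          have hnne : (n:ℝ) ≠ 0 := hnpos.ne'
          field_simp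
  have hcabs : ∀ i, |c i| ≤ ρ/2 := by
    intro i
    refine le_trans ?_ hsumabs
    exact Finset.single_le_sum (f := fun j => |c j|) (fun j _ => abs_nonneg _)
      (Finset.mem_univ i)
  -- key coordinatewise inequality
  have key : ∀ i, -((2 * |c i| / ρ) * ((‖zp i‖ + ‖zm i‖) * ‖w‖ + T)) ≤ c i * d i := by
    intro i
    have hzpw : ∀ (zz : EuclideanSpace ℝ (Fin m)) (ss : EuclideanSpace ℝ (Fin n)),
        (∀ y, J x₀ + ((⟪ss, y - x₀⟫_ℝ : ℝ) : EReal) ≤ J y) →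
        -( ‖zz‖ * ‖w‖ + T) ≤ ⟪ContinuousLinearMap.adjoint A zz - ss, d⟫_ℝ := by
      intro zz ss hss
      rw [inner_sub_left, ContinuousLinearMap.adjoint_inner_left, hAd]
      have h5 : |⟪zz, w⟫_ℝ| ≤ ‖zz‖ * ‖w‖ := abs_real_inner_le_norm zz w
      have h6 := H ss hss
      have h7 : -(‖zz‖ * ‖w‖) ≤ ⟪zz, w⟫_ℝ := neg_le_of_abs_le h5
      linarith
    rcases le_or_gt 0 (c i) with hci | hci
    · -- use the plus representation
      have hsmul : c i • E i = (2 * c i / ρ) • ((ρ/2) • E i) := by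
        rw [smul_smul]; congr 1; field_simp
        try ring
      have hip : ⟪c i • E i, d⟫_ℝ = c i * d i := by
        rw [real_inner_smul_left, hEd i]
      have hip2 : ⟪c i • E i, d⟫_ℝ = (2 * c i / ρ) * ⟪(ρ/2) • E i, d⟫_ℝ := by
        rw [hsmul, real_inner_smul_left]
      have hlow := hzpw (zp i) (sp i) (hsp i)
      rw [← hzp i] at hlow
      have hcoef : 0 ≤ 2 * c i / ρ := by positivity
      have habs : |c i| = c i := abs_of_nonneg hci
      have hbase : -((‖zp i‖ + ‖zm i‖) * ‖w‖ + T) ≤ ⟪(ρ/2) • E i, d⟫_ℝ := by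
        refine le_trans ?_ hlow
        have : 0 ≤ ‖zm i‖ * ‖w‖ := by positivity
        nlinarith
      calc -((2 * |c i| / ρ) * ((‖zp i‖ + ‖zm i‖) * ‖w‖ + T))
          = (2 * c i / ρ) * (-((‖zp i‖ + ‖zm i‖) * ‖w‖ + T)) := by rw [habs]; ring
        _ ≤ (2 * c i / ρ) * ⟪(ρ/2) • E i, d⟫_ℝ := by
            exact mul_le_mul_of_nonneg_left hbase hcoef
        _ = c i * d i := by rw [← hip2, hip]
    · -- use the minus representation
      have hsmul : c i • E i = (-(2 * c i / ρ)) • ((-(ρ/2)) • E i) := by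
        rw [smul_smul]; congr 1; field_simp
        try ring
      have hip : ⟪c i • E i, d⟫_ℝ = c i * d i := by
        rw [real_inner_smul_left, hEd i]
      have hip2 : ⟪c i • E i, d⟫_ℝ = (-(2 * c i / ρ)) * ⟪(-(ρ/2)) • E i, d⟫_ℝ := by
        rw [hsmul, real_inner_smul_left]
      have hlow := hzpw (zm i) (sm i) (hsm i)
      rw [← hzm i] at hlow
      have hcoef : 0 ≤ -(2 * c i / ρ) := by
        have : 2 * c i / ρ ≤ 0 := div_nonpos_of_nonpos_of_nonneg (by linarith) hρpos.le
        linarith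
      have habs : |c i| = -c i := abs_of_neg hci
      have hbase : -((‖zp i‖ + ‖zm i‖) * ‖w‖ + T) ≤ ⟪(-(ρ/2)) • E i, d⟫_ℝ := by
        refine le_trans ?_ hlow
        have : 0 ≤ ‖zp i‖ * ‖w‖ := by positivity
        nlinarith
      calc -((2 * |c i| / ρ) * ((‖zp i‖ + ‖zm i‖) * ‖w‖ + T))
          = (-(2 * c i / ρ)) * (-((‖zp i‖ + ‖zm i‖) * ‖w‖ + T)) := by rw [habs]; ring
        _ ≤ (-(2 * c i / ρ)) * ⟪(-(ρ/2)) • E i, d⟫_ℝ := by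
            exact mul_le_mul_of_nonneg_left hbase hcoef
        _ = c i * d i := by rw [← hip2, hip]
  -- sum up
  have hbd : ∑ i, (2 * |c i| / ρ) * ((‖zp i‖ + ‖zm i‖) * ‖w‖ + T) ≤ M * ‖w‖ + T := by
    have hterm : ∀ i ∈ Finset.univ, (2 * |c i| / ρ) * ((‖zp i‖ + ‖zm i‖) * ‖w‖ + T)
        ≤ (‖zp i‖ + ‖zm i‖) * ‖w‖ + (2 * |c i| / ρ) * T := by
      intro i _
      have h1 : 2 * |c i| / ρ ≤ 1 := by
        rw [div_le_one hρpos]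
        have := hcabs i; linarith
      have h2 : 0 ≤ 2 * |c i| / ρ := by positivity
      have h3 : 0 ≤ (‖zp i‖ + ‖zm i‖) * ‖w‖ := by positivity
      nlinarith
    calc ∑ i, (2 * |c i| / ρ) * ((‖zp i‖ + ‖zm i‖) * ‖w‖ + T)
        ≤ ∑ i, ((‖zp i‖ + ‖zm i‖) * ‖w‖ + (2 * |c i| / ρ) * T) :=
          Finset.sum_le_sum hterm
      _ = M * ‖w‖ + (2 / ρ * ∑ i, |c i|) * T := by
          rw [Finset.sum_add_distrib, ← Finset.sum_mul, ← hM, ← Finset.sum_mul,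
            Finset.mul_sum]
          congr 1
          congr 1
          exact Finset.sum_congr rfl fun i _ => by ring
      _ ≤ M * ‖w‖ + 1 * T := by
          have h4 : 2 / ρ * ∑ i, |c i| ≤ 1 := by
            calc 2 / ρ * ∑ i, |c i| ≤ 2 / ρ * (ρ / 2) :=
                  mul_le_mul_of_nonneg_left hsumabs (by positivity)
              _ = 1 := by field_simp
          have h5 : 0 ≤ ∑ i, |c i| := Finset.sum_nonneg fun i _ => abs_nonneg _
          nlinarith
      _ = M * ‖w‖ + T := by ring
  have hsum : -(M * ‖w‖ + T) ≤ ∑ i, c i * d i := by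
    have hsum1 : ∑ i, -((2 * |c i| / ρ) * ((‖zp i‖ + ‖zm i‖) * ‖w‖ + T)) ≤ ∑ i, c i * d i :=
      Finset.sum_le_sum fun i _ => key i
    refine le_trans ?_ hsum1
    rw [Finset.sum_neg_distrib]
    exact neg_le_neg hbd
  -- compute the left-hand sum
  have hsq : (∑ i, d i * d i) = ‖d‖^2 := by
    rw [EuclideanSpace.norm_eq, Real.sq_sqrt (by positivity)]
    exact Finset.sum_congr rfl fun i _ => by rw [Real.norm_eq_abs, sq_abs, sq]
  have hlhs : (∑ i, c i * d i) = -(ρ' * ‖d‖) := by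
    calc (∑ i, c i * d i) = -(ρ' / ‖d‖) * ∑ i, d i * d i := by
          rw [Finset.mul_sum]
          exact Finset.sum_congr rfl fun i _ => by rw [hc]; ring
      _ = -(ρ' / ‖d‖) * ‖d‖^2 := by rw [hsq]
      _ = -(ρ' * ‖d‖) := by
          have hdne : ‖d‖ ≠ 0 := hdpos.ne'
          field_simp
  rw [hlhs] at hsum
  -- conclude
  have hmain : ρ' * ‖d‖ ≤ M * ‖w‖ + ‖v‖ * ‖d‖ + ‖y₀‖ * ‖w‖ := by
    rw [hT] at hsum; linarith
  have hv2 : ‖v‖ ≤ ρ'/2 := le_of_lt hvnorm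
  have hstep : (ρ'/2) * ‖d‖ ≤ (M + ‖y₀‖) * ‖w‖ := by nlinarith
  have hfinal : ‖d‖ ≤ 2 * (M + ‖y₀‖ + 1) / ρ' * ‖w‖ := by
    rw [div_mul_eq_mul_div, le_div_iff₀ hρ'pos]
    nlinarith [norm_nonneg w]
  calc ‖d‖ ≤ 2 * (M + ‖y₀‖ + 1) / ρ' * ‖w‖ := hfinal
    _ ≤ 2 * (M + ‖y₀‖ + 1) / ρ' * (‖v‖ + ‖w‖) := by
        apply mul_le_mul_of_nonneg_left _ (by positivity)
        linarith [norm_nonneg v]
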